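/- For a positive integer $m$ and natural numbers $j,k$ with $j+k \ge m$, the integral $4\int_0^{\infty}\int_0^{\infty} \frac{e^{-m(\rho_1^2+\rho_2^2)}}{(\rho_1^2+\rho_2^2)^{m+1}}(1+\rho_1^2+\rho_2^2)\,\rho_1^{2j+1}\rho_2^{2k+1}\,d\rho_1\,d\rho_2 = \frac{j!\,k!}{(j+k)!}\cdot\frac{(j+k-m)!}{m^{j+k-m+2}}$. -/

import Mathlib

open Real MeasureTheory Set
open scoped ENNReal

noncomputable def simG (m : ℕ) (s : ℝ) : ℝ := Real.exp (-(m:ℝ) * s) / s^(m+1) * (1 + s)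

noncomputable def simPsi (m j k : ℕ) (u s : ℝ) : ℝ := simG m s * (s-u)^k * u^j

lemma simG_meas (m : ℕ) : Measurable (simG m) := by
  unfold simG; fun_prop

lemma simG_nonneg (m : ℕ) {s : ℝ} (hs : 0 < s) : 0 ≤ simG m s := by
  unfold simG; positivity

lemma simPsi_nonneg (m j k : ℕ) {u s : ℝ} (hu : 0 ≤ u) (hus : u < s) :
    0 ≤ simPsi m j k u s := by
  have hs : 0 < s := lt_of_le_of_lt hu hus
  unfold simPsi
  exact mul_nonneg (mul_nonneg (simG_nonneg m hs) (pow_nonneg (by linarith) k))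
    (pow_nonneg hu j)

lemma simPsi_meas_prod (m j k : ℕ) :
    Measurable (fun q : ℝ×ℝ => ENNReal.ofReal (simPsi m j k q.1 q.2)) := by
  unfold simPsi simG; fun_prop

lemma simPsi_meas_snd (m j k : ℕ) (u : ℝ) : Measurable (fun s => simPsi m j k u s) := by
  unfold simPsi simG; fun_prop

lemma integrableOn_pow_exp (q : ℕ) {r : ℝ} (hr : 0 < r) :
    IntegrableOn (fun s : ℝ => Real.exp (-(r*s)) * s^q) (Ioi 0) := by
  have h := integrableOn_rpow_mul_exp_neg_mul_rpow (s := (q:ℝ)) (p := 1)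
    (lt_of_lt_of_le (by norm_num) (Nat.cast_nonneg q)) zero_lt_one hr
  refine h.congr_fun (fun x hx => ?_) measurableSet_Ioi
  dsimp only
  rw [Real.rpow_one, Real.rpow_natCast, mul_comm, neg_mul]

lemma integral_pow_exp (q : ℕ) {r : ℝ} (hr : 0 < r) :
    ∫ s in Ioi (0:ℝ), Real.exp (-(r*s)) * s^q = q.factorial / r^(q+1) := by
  have h := integral_rpow_mul_exp_neg_mul_Ioi (a := (q:ℝ)+1) (r := r) (by positivity) hr
  rw [show ((q:ℝ)+1) - 1 = (q:ℝ) by ring] at h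
  simp_rw [Real.rpow_natCast] at h
  rw [show ∫ s in Ioi (0:ℝ), Real.exp (-(r*s)) * s^q
      = ∫ t in Ioi (0:ℝ), t^q * Real.exp (-(r*t)) from by congr 1; funext t; ring, h,
    show ((q:ℝ)+1) = ((q+1 : ℕ) : ℝ) by push_cast; ring, Real.rpow_natCast]
  rw [show ((q+1:ℕ) : ℝ) = (q:ℝ) + 1 from by push_cast; ring,
    Real.Gamma_nat_eq_factorial, div_pow, one_pow]
  field_simp

lemma sq_subst (g : ℝ → ℝ) (a : ℕ) :
    ∫ x in Ioi (0:ℝ), g (x^2) * x^(2*a+1) = (1/2) * ∫ t in Ioi (0:ℝ), g t * t^a := by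
  rw [← integral_const_mul]
  rw [← integral_comp_rpow_Ioi (fun t => (1/2 : ℝ) * (g t * t^a)) (p := 2) two_ne_zero]
  refine setIntegral_congr_fun measurableSet_Ioi (fun x hx => ?_)
  have hx0 : (0:ℝ) < x := hx
  have h2 : x ^ (2:ℝ) = x^2 := by rw [← Real.rpow_natCast x 2]; norm_num
  rw [smul_eq_mul, h2, show (2:ℝ) - 1 = 1 by norm_num, Real.rpow_one]
  rw [← pow_mul]
  rw [abs_of_nonneg (by norm_num : (0:ℝ) ≤ 2)]
  ring

lemma shift_Ioi (W : ℝ → ℝ) (u : ℝ) :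
    ∫ t in Ioi (0:ℝ), W (t + u) = ∫ s in Ioi u, W s := by
  rw [← integral_indicator measurableSet_Ioi, ← integral_indicator measurableSet_Ioi]
  have h : ∀ t : ℝ, Set.indicator (Ioi (0:ℝ)) (fun t => W (t+u)) t
      = Set.indicator (Ioi u) W (t + u) := by
    intro t
    simp only [Set.indicator_apply, mem_Ioi, lt_add_iff_pos_left]
  simp_rw [h]
  exact integral_add_right_eq_self (Set.indicator (Ioi u) W) u

lemma beta_nat (k : ℕ) : ∀ (j : ℕ) {s : ℝ}, 0 ≤ s →
    ∫ u in (0:ℝ)..s, u^j * (s-u)^k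
      = (j.factorial * k.factorial / (j+k+1).factorial : ℝ) * s^(j+k+1) := by
  induction k with
  | zero =>
    intro j s hs
    simp only [pow_zero, mul_one, Nat.factorial_zero, Nat.mul_one, Nat.add_zero]
    rw [integral_pow]
    have : ((j+1).factorial : ℝ) = (j+1) * j.factorial := by
      exact_mod_cast Nat.factorial_succ j
    rw [this]
    have hj : ((j:ℝ)+1) ≠ 0 := by positivity
    have hjf : (j.factorial : ℝ) ≠ 0 := by positivity
    field_simp
    push_cast
    ring
  | succ k ih =>
    intro j s hs
    have hu : ∀ x ∈ uIcc (0:ℝ) s, HasDerivAt (fun x : ℝ => (s-x)^(k+1))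
        (-(((k:ℝ)+1) * (s-x)^k)) x := by
      intro x _
      have h1 : HasDerivAt (fun x : ℝ => s - x) (-1) x := (hasDerivAt_id x).const_sub s
      have := h1.pow (k+1)
      refine this.congr_deriv ?_
      push_cast
      ring_nf
    have hv : ∀ x ∈ uIcc (0:ℝ) s, HasDerivAt (fun x : ℝ => x^(j+1))
        (((j:ℝ)+1) * x^j) x := by
      intro x _
      have := hasDerivAt_pow (j+1) x
      refine this.congr_deriv ?_
      push_cast
      simp
    have hu' : IntervalIntegrable (fun x : ℝ => -(((k:ℝ)+1) * (s-x)^k)) volume 0 s :=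
      (Continuous.intervalIntegrable (by continuity) _ _)
    have hv' : IntervalIntegrable (fun x : ℝ => ((j:ℝ)+1) * x^j) volume 0 s :=
      (Continuous.intervalIntegrable (by continuity) _ _)
    have ibp := intervalIntegral.integral_mul_deriv_eq_deriv_mul hu hv hu' hv'
    -- ibp : ∫ x in 0..s, (s-x)^(k+1) * (((j:ℝ)+1) * x^j)
    --     = (s-s)^(k+1) * s^(j+1) - (s-0)^(k+1) * 0^(j+1)
    --       - ∫ x in 0..s, (-(((k:ℝ)+1) * (s-x)^k)) * x^(j+1)
    have hL : ∫ x in (0:ℝ)..s, (s-x)^(k+1) * (((j:ℝ)+1) * x^j)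
        = ((j:ℝ)+1) * ∫ x in (0:ℝ)..s, x^j * (s-x)^(k+1) := by
      rw [← intervalIntegral.integral_const_mul]
      congr 1; funext x; ring
    have hR : ∫ x in (0:ℝ)..s, (-(((k:ℝ)+1) * (s-x)^k)) * x^(j+1)
        = -(((k:ℝ)+1) * ∫ x in (0:ℝ)..s, x^(j+1) * (s-x)^k) := by
      rw [← intervalIntegral.integral_const_mul, ← intervalIntegral.integral_neg]
      congr 1; funext x; ring
    rw [hL, hR] at ibp
    rw [sub_self, zero_pow (Nat.succ_ne_zero k), zero_pow (Nat.succ_ne_zero j), zero_mul,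
      mul_zero, zero_sub, sub_neg_eq_add, neg_zero, zero_add] at ibp
    rw [ih (j+1) hs] at ibp
    have hj : ((j:ℝ)+1) ≠ 0 := by positivity
    have e : (∫ u in (0:ℝ)..s, u^j*(s-u)^(k+1))
        = ((↑k+1) * ((((j+1).factorial : ℝ)) * (k.factorial : ℝ)
            / (((j+1)+k+1).factorial : ℝ) * s^((j+1)+k+1)))/((j:ℝ)+1) := by
      rw [← ibp]; field_simp
    rw [show j+(k+1)+1 = (j+1)+k+1 from by omega, e,
      show (j+1).factorial = (j+1)*j.factorial from Nat.factorial_succ j,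
      show (k+1).factorial = (k+1)*k.factorial from Nat.factorial_succ k]
    have h1 : ((((j+1)+k+1).factorial : ℕ) : ℝ) ≠ 0 := by positivity
    push_cast
    field_simp

lemma fin_lemma (m j k : ℕ) (hm : 1 ≤ m) {u : ℝ} (hu : 0 < u) :
    ∫⁻ s in Ioi u, ENNReal.ofReal (simPsi m j k u s) ≠ ⊤ := by
  have hm0 : (0:ℝ) < m := by exact_mod_cast hm
  have hbound : ∀ s ∈ Ioi u, simPsi m j k u s
      ≤ (u^j / u^(m+1)) * (Real.exp (-((m:ℝ)*s)) * s^k + Real.exp (-((m:ℝ)*s)) * s^(k+1)) := by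
    intro s hs
    have hus : u < s := hs
    have hs0 : 0 < s := hu.trans hus
    have h1 : (s-u)^k ≤ s^k := pow_le_pow_left₀ (by linarith) (by linarith) k
    have h2 : u^(m+1) ≤ s^(m+1) := pow_le_pow_left₀ hu.le hus.le (m+1)
    have hum : (0:ℝ) < u^(m+1) := by positivity
    have e1 : simPsi m j k u s
        = Real.exp (-((m:ℝ)*s)) * (1+s) * (s-u)^k * u^j / s^(m+1) := by
      unfold simPsi simG; rw [neg_mul]; ring
    have e2 : (u^j / u^(m+1)) * (Real.exp (-((m:ℝ)*s)) * s^k + Real.exp (-((m:ℝ)*s)) * s^(k+1))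
        = Real.exp (-((m:ℝ)*s)) * (1+s) * s^k * u^j / u^(m+1) := by ring
    rw [e1, e2]
    gcongr
  have hint : Integrable (fun s : ℝ => (u^j / u^(m+1))
      * (Real.exp (-((m:ℝ)*s)) * s^k + Real.exp (-((m:ℝ)*s)) * s^(k+1)))
      (volume.restrict (Ioi (0:ℝ))) :=
    (((integrableOn_pow_exp k hm0).add (integrableOn_pow_exp (k+1) hm0)).const_mul _)
  have key : ∫⁻ s in Ioi u, ENNReal.ofReal (simPsi m j k u s)
      ≤ ∫⁻ s in Ioi (0:ℝ), ENNReal.ofReal ((u^j / u^(m+1))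
        * (Real.exp (-((m:ℝ)*s)) * s^k + Real.exp (-((m:ℝ)*s)) * s^(k+1))) := by
    refine le_trans (lintegral_mono_ae ?_) (lintegral_mono_set (Ioi_subset_Ioi hu.le))
    refine (ae_restrict_iff' measurableSet_Ioi).2 (ae_of_all _ (fun s hs => ?_))
    exact ENNReal.ofReal_le_ofReal (hbound s hs)
  exact ne_top_of_le_ne_top hint.lintegral_lt_top.ne key

lemma stage2 (m j k : ℕ) (u : ℝ) :
    (∫ t in Ioi (0:ℝ),
        Real.exp (-(m:ℝ) * (u + t)) / (u+t)^(m+1) * (1 + u + t) * t^k) * u^j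
      = ∫ s in Ioi u, simPsi m j k u s := by
  rw [← integral_mul_const, ← shift_Ioi (fun s => simPsi m j k u s) u]
  congr 1
  funext t
  unfold simPsi simG
  rw [add_sub_cancel_right]
  ring_nf

lemma stage1 (m j k : ℕ) :
    4 * ∫ ρ₁ in Set.Ioi (0:ℝ), ∫ ρ₂ in Set.Ioi (0:ℝ),
        Real.exp (-(m:ℝ) * (ρ₁^2 + ρ₂^2)) / (ρ₁^2 + ρ₂^2)^(m+1)
          * (1 + ρ₁^2 + ρ₂^2) * ρ₁^(2*j+1) * ρ₂^(2*k+1)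
      = ∫ u in Ioi (0:ℝ),
          (∫ t in Ioi (0:ℝ),
            Real.exp (-(m:ℝ) * (u + t)) / (u+t)^(m+1) * (1 + u + t) * t^k) * u^j := by
  have h1 : ∀ x : ℝ, (∫ ρ₂ in Set.Ioi (0:ℝ),
      Real.exp (-(m:ℝ) * (x^2 + ρ₂^2)) / (x^2 + ρ₂^2)^(m+1)
        * (1 + x^2 + ρ₂^2) * x^(2*j+1) * ρ₂^(2*k+1))
      = ((1/2) * ∫ t in Ioi (0:ℝ),
          Real.exp (-(m:ℝ) * (x^2 + t)) / (x^2 + t)^(m+1) * (1 + x^2 + t) * t^k) * x^(2*j+1) := by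
    intro x
    have := sq_subst (fun t => Real.exp (-(m:ℝ) * (x^2 + t)) / (x^2 + t)^(m+1)
        * (1 + x^2 + t) * x^(2*j+1)) k
    rw [this, show (∫ t in Ioi (0:ℝ),
        Real.exp (-(m:ℝ) * (x^2 + t)) / (x^2 + t)^(m+1) * (1 + x^2 + t) * x^(2*j+1) * t^k)
        = (∫ t in Ioi (0:ℝ),
            Real.exp (-(m:ℝ) * (x^2 + t)) / (x^2 + t)^(m+1) * (1 + x^2 + t) * t^k) * x^(2*j+1)
      from by rw [← integral_mul_const]; congr 1; funext t; ring]
    ring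
  simp_rw [h1]
  rw [sq_subst (fun u => (1/2) * ∫ t in Ioi (0:ℝ),
      Real.exp (-(m:ℝ) * (u + t)) / (u + t)^(m+1) * (1 + u + t) * t^k) j,
    ← integral_const_mul, ← integral_const_mul]
  congr 1
  funext u
  ring

lemma conv1 (m j k : ℕ) (hm : 1 ≤ m) :
    ∫ u in Ioi (0:ℝ), ∫ s in Ioi u, simPsi m j k u s
      = (∫⁻ u in Ioi (0:ℝ), ∫⁻ s in Ioi u, ENNReal.ofReal (simPsi m j k u s)).toReal := by
  have ha : ∀ u ∈ Ioi (0:ℝ), (∫ s in Ioi u, simPsi m j k u s)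
      = (∫⁻ s in Ioi u, ENNReal.ofReal (simPsi m j k u s)).toReal := by
    intro u hu
    apply integral_eq_lintegral_of_nonneg_ae
    · filter_upwards [self_mem_ae_restrict measurableSet_Ioi] with s hs
      exact simPsi_nonneg m j k (le_of_lt hu) hs
    · exact (simPsi_meas_snd m j k u).aestronglyMeasurable
  rw [setIntegral_congr_fun measurableSet_Ioi ha]
  -- measurability of the lintegral in u, via the master function
  have hΦm : Measurable (fun q : ℝ×ℝ =>
      ({q : ℝ×ℝ | q.1 < q.2}.indicator (fun q => ENNReal.ofReal (simPsi m j k q.1 q.2))) q) :=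
    (simPsi_meas_prod m j k).indicator (measurableSet_lt measurable_fst measurable_snd)
  have hL : ∀ u : ℝ, (∫⁻ s in Ioi u, ENNReal.ofReal (simPsi m j k u s))
      = ∫⁻ s, ({q : ℝ×ℝ | q.1 < q.2}.indicator
          (fun q => ENNReal.ofReal (simPsi m j k q.1 q.2))) (u, s) := by
    intro u
    rw [← lintegral_indicator measurableSet_Ioi]
    congr 1
  have hmeas : Measurable (fun u : ℝ =>
      (∫⁻ s in Ioi u, ENNReal.ofReal (simPsi m j k u s)).toReal) := by
    simp_rw [hL]
    exact hΦm.lintegral_prod_right'.ennreal_toReal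
  rw [integral_eq_lintegral_of_nonneg_ae
    (ae_of_all _ (fun u => ENNReal.toReal_nonneg)) hmeas.aestronglyMeasurable]
  congr 1
  refine setLIntegral_congr_fun_ae measurableSet_Ioi (ae_of_all _ (fun u hu => ?_))
  rw [ENNReal.ofReal_toReal (fin_lemma m j k hm hu)]

lemma conv2 (m j k : ℕ) :
    ∫⁻ u in Ioi (0:ℝ), ∫⁻ s in Ioi u, ENNReal.ofReal (simPsi m j k u s)
      = ∫⁻ s in Ioi (0:ℝ), ∫⁻ u in Ioo (0:ℝ) s, ENNReal.ofReal (simPsi m j k u s) := by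
  set S : Set (ℝ×ℝ) := {q | 0 < q.1 ∧ q.1 < q.2} with hSdef
  have hSm : MeasurableSet S :=
    (measurableSet_lt measurable_const measurable_fst).inter
      (measurableSet_lt measurable_fst measurable_snd)
  set Φ : ℝ×ℝ → ℝ≥0∞ := S.indicator (fun q => ENNReal.ofReal (simPsi m j k q.1 q.2)) with hΦdef
  have hΦm : Measurable Φ := (simPsi_meas_prod m j k).indicator hSm
  have h1 : ∀ u : ℝ, (Ioi (0:ℝ)).indicator
      (fun u => ∫⁻ s in Ioi u, ENNReal.ofReal (simPsi m j k u s)) u = ∫⁻ s, Φ (u, s) := by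
    intro u
    by_cases hu : (0:ℝ) < u
    · rw [Set.indicator_of_mem (mem_Ioi.2 hu), ← lintegral_indicator measurableSet_Ioi]
      congr 1
      funext s
      simp only [hΦdef, Set.indicator_apply, mem_Ioi, Set.mem_setOf_eq, hSdef, hu, true_and]
    · rw [Set.indicator_of_notMem (by simpa using hu)]
      symm
      simp [hΦdef, Set.indicator_apply, hSdef, hu]
  have h2 : ∀ s : ℝ, (∫⁻ u, Φ (u, s)) = (Ioi (0:ℝ)).indicator
      (fun s => ∫⁻ u in Ioo (0:ℝ) s, ENNReal.ofReal (simPsi m j k u s)) s := by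
    intro s
    by_cases hs : (0:ℝ) < s
    · rw [Set.indicator_of_mem (mem_Ioi.2 hs), ← lintegral_indicator measurableSet_Ioo]
      congr 1
    · rw [Set.indicator_of_notMem (by simpa using hs)]
      have hcon : ∀ u : ℝ, ¬((0:ℝ) < u ∧ u < s) := fun u hc => hs (hc.1.trans hc.2)
      simp [hΦdef, Set.indicator_apply, hSdef, hcon]
  calc ∫⁻ u in Ioi (0:ℝ), ∫⁻ s in Ioi u, ENNReal.ofReal (simPsi m j k u s)
      = ∫⁻ u, (Ioi (0:ℝ)).indicator
          (fun u => ∫⁻ s in Ioi u, ENNReal.ofReal (simPsi m j k u s)) u :=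
        (lintegral_indicator measurableSet_Ioi _).symm
    _ = ∫⁻ u, ∫⁻ s, Φ (u, s) := lintegral_congr h1
    _ = ∫⁻ s, ∫⁻ u, Φ (u, s) := lintegral_lintegral_swap hΦm.aemeasurable
    _ = ∫⁻ s, (Ioi (0:ℝ)).indicator
          (fun s => ∫⁻ u in Ioo (0:ℝ) s, ENNReal.ofReal (simPsi m j k u s)) s :=
        lintegral_congr h2
    _ = ∫⁻ s in Ioi (0:ℝ), ∫⁻ u in Ioo (0:ℝ) s, ENNReal.ofReal (simPsi m j k u s) :=
        lintegral_indicator measurableSet_Ioi _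

lemma inner_beta (m j k : ℕ) {s : ℝ} (hs : (0:ℝ) < s) :
    ∫⁻ u in Ioo (0:ℝ) s, ENNReal.ofReal (simPsi m j k u s)
      = ENNReal.ofReal (simG m s
          * ((j.factorial * k.factorial / (j+k+1).factorial : ℝ) * s^(j+k+1))) := by
  have hcont : Continuous (fun u : ℝ => simPsi m j k u s) := by unfold simPsi; fun_prop
  have hint : IntegrableOn (fun u => simPsi m j k u s) (Ioo (0:ℝ) s) :=
    (hcont.integrableOn_Icc).mono_set Ioo_subset_Icc_self
  have hnn : 0 ≤ᵐ[volume.restrict (Ioo (0:ℝ) s)] fun u => simPsi m j k u s := by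
    filter_upwards [self_mem_ae_restrict measurableSet_Ioo] with u hu
    exact simPsi_nonneg m j k hu.1.le hu.2
  rw [← ofReal_integral_eq_lintegral_ofReal hint hnn]
  congr 1
  calc ∫ u in Ioo (0:ℝ) s, simPsi m j k u s
      = ∫ u in Ioo (0:ℝ) s, simG m s * (u^j * (s-u)^k) := by
        congr 1; funext u; unfold simPsi; ring
    _ = simG m s * ∫ u in Ioo (0:ℝ) s, u^j * (s-u)^k := integral_const_mul _ _
    _ = simG m s * ∫ u in (0:ℝ)..s, u^j * (s-u)^k := by
        rw [intervalIntegral.integral_of_le hs.le, integral_Ioc_eq_integral_Ioo]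
    _ = simG m s * ((j.factorial * k.factorial / (j+k+1).factorial : ℝ) * s^(j+k+1)) := by
        rw [beta_nat k j hs.le]

lemma final_integral (m j k : ℕ) (hm : 1 ≤ m) (hjk : m ≤ j + k) :
    ∫ s in Ioi (0:ℝ), simG m s
        * ((j.factorial * k.factorial / (j+k+1).factorial : ℝ) * s^(j+k+1))
      = (j.factorial * k.factorial : ℝ) / (j+k).factorial
          * ((j+k-m).factorial : ℝ) / (m:ℝ)^(j+k-m+2) := by
  have hm0 : (0:ℝ) < m := by exact_mod_cast hm
  have hnp : j + k + 1 = (j+k-m) + (m+1) := by omega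
  have hcongr : ∀ s ∈ Ioi (0:ℝ), simG m s
        * ((j.factorial * k.factorial / (j+k+1).factorial : ℝ) * s^(j+k+1))
      = (j.factorial * k.factorial / (j+k+1).factorial : ℝ)
          * (Real.exp (-((m:ℝ)*s)) * s^(j+k-m) + Real.exp (-((m:ℝ)*s)) * s^(j+k-m+1)) := by
    intro s hs
    have hs0 : (0:ℝ) < s := hs
    unfold simG
    rw [hnp, pow_add, neg_mul]
    field_simp
    ring
  rw [setIntegral_congr_fun measurableSet_Ioi hcongr, integral_const_mul,
    integral_add (integrableOn_pow_exp (j+k-m) hm0) (integrableOn_pow_exp (j+k-m+1) hm0),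
    integral_pow_exp (j+k-m) hm0, integral_pow_exp (j+k-m+1) hm0]
  have h1 : ((j+k+1).factorial : ℝ) = ((j+k:ℕ):ℝ) * (j+k).factorial + (j+k).factorial := by
    rw [show ((j+k+1).factorial : ℕ) = (j+k+1) * (j+k).factorial from Nat.factorial_succ _]
    push_cast; ring
  have h2 : ((j+k-m+1).factorial : ℝ) = ((j+k-m:ℕ):ℝ) * (j+k-m).factorial + (j+k-m).factorial := by
    rw [show ((j+k-m+1).factorial : ℕ) = (j+k-m+1) * (j+k-m).factorial from Nat.factorial_succ _]
    push_cast; ring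
  have h4 : ((j+k:ℕ):ℝ) = (m:ℝ) + ((j+k-m:ℕ):ℝ) := by
    have : j + k = m + (j+k-m) := by omega
    exact_mod_cast this
  rw [h1, h2, h4]
  have hf1 : ((j+k).factorial : ℝ) ≠ 0 := by positivity
  have hf2 : ((j+k-m).factorial : ℝ) ≠ 0 := by positivity
  have hmp : (m:ℝ)^(j+k-m+2) ≠ 0 := by positivity
  push_cast
  field_simp
  ring

theorem simanca_monomial_norm (m j k : ℕ) (hm : 1 ≤ m) (hjk : m ≤ j + k) :
    4 * ∫ ρ₁ in Set.Ioi (0:ℝ), ∫ ρ₂ in Set.Ioi (0:ℝ),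
        Real.exp (-(m:ℝ) * (ρ₁^2 + ρ₂^2)) / (ρ₁^2 + ρ₂^2)^(m+1)
          * (1 + ρ₁^2 + ρ₂^2) * ρ₁^(2*j+1) * ρ₂^(2*k+1)
      = (j.factorial * k.factorial : ℝ) / (j+k).factorial
          * ((j+k-m).factorial : ℝ) / (m:ℝ)^(j+k-m+2) := by
  rw [stage1 m j k,
    show (∫ u in Ioi (0:ℝ), (∫ t in Ioi (0:ℝ),
        Real.exp (-(m:ℝ) * (u + t)) / (u+t)^(m+1) * (1 + u + t) * t^k) * u^j)
      = ∫ u in Ioi (0:ℝ), ∫ s in Ioi u, simPsi m j k u s from by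
        congr 1; funext u; exact stage2 m j k u,
    conv1 m j k hm, conv2 m j k,
    setLIntegral_congr_fun_ae measurableSet_Ioi (ae_of_all _ (fun s hs => inner_beta m j k hs))]
  have hnn : 0 ≤ᵐ[volume.restrict (Ioi (0:ℝ))] fun s : ℝ => simG m s
      * ((j.factorial * k.factorial / (j+k+1).factorial : ℝ) * s^(j+k+1)) := by
    filter_upwards [self_mem_ae_restrict measurableSet_Ioi] with s hs
    exact mul_nonneg (simG_nonneg m hs) (mul_nonneg (by positivity) (pow_nonneg (le_of_lt hs) _))
  have hsm : AEStronglyMeasurable (fun s : ℝ => simG m s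
      * ((j.factorial * k.factorial / (j+k+1).factorial : ℝ) * s^(j+k+1)))
      (volume.restrict (Ioi (0:ℝ))) :=
    ((simG_meas m).mul (measurable_const.mul (measurable_id.pow_const _))).aestronglyMeasurable
  rw [← integral_eq_lintegral_of_nonneg_ae hnn hsm]
  exact final_integral m j k hm hjk
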